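/- The set of equilibrium points of the system (S) lying in the region {X ≥ 0, Z ≥ 0} is exactly {(0, λ, −λ² − (β/α)λ) : λ ∈ [−β/α, 0]} ∪ {P2}, where P2 = ((m−1)/(2(m+1)α), 1/((m+1)α), 0). In particular, the equilibria with X = 0 and Z ≥ 0 form the critical parabola {X = 0, Z = −Y² − (β/α)Y, −β/α ≤ Y ≤ 0}. -/

import Mathlib

open Real Set Filter Topology

/-- The self-similar exponent `α = (σ+2)/((σ-2)(m-1))`. -/
noncomputable def ssAlpha (m σ : ℝ) : ℝ := (σ + 2) / ((σ - 2) * (m - 1))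

/-- The self-similar exponent `β = 2/(σ-2)`. -/
noncomputable def ssBeta (σ : ℝ) : ℝ := 2 / (σ - 2)

/-- `(X,Y,Z)` satisfies the quadratic system (S) at time `η`:
`X' = X((m−1)Y − 2X)`, `Y' = −Y² − (β/α)Y + X − XY − Z`, `Z' = (σ−2)XZ`. -/
def SysAt (m σ : ℝ) (X Y Z : ℝ → ℝ) (η : ℝ) : Prop :=
  HasDerivAt X (X η * ((m - 1) * Y η - 2 * X η)) η ∧
  HasDerivAt Y (-(Y η) ^ 2 - ssBeta σ / ssAlpha m σ * Y η + X η - X η * Y η - Z η) η ∧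
  HasDerivAt Z ((σ - 2) * X η * Z η) η

/-- The equilibrium `P0^λ = (0, λ, −λ² − (β/α)λ)` on the critical parabola. -/
noncomputable def P0pt (m σ l : ℝ) : ℝ × ℝ × ℝ :=
  (0, l, -l ^ 2 - ssBeta σ / ssAlpha m σ * l)

/-- The equilibrium `P2 = ((m−1)/(2(m+1)α), 1/((m+1)α), 0)`. -/
noncomputable def P2pt (m σ : ℝ) : ℝ × ℝ × ℝ :=
  ((m - 1) / (2 * (m + 1) * ssAlpha m σ), 1 / ((m + 1) * ssAlpha m σ), 0)

/-- the equilibria of (S) in `{X ≥ 0, Z ≥ 0}` are exactly the critical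
parabola `{(0, λ, −λ² − (β/α)λ) : λ ∈ [−β/α, 0]}` together with `P2`; in particular
the equilibria with `X = 0`, `Z ≥ 0` form exactly the critical parabola. -/
theorem equilibria_classification
    (m σ : ℝ) (hm1 : 1 < m) (hm2 : m < 2) (hσ : 2 < σ) :
    {p : ℝ × ℝ × ℝ | 0 ≤ p.1 ∧ 0 ≤ p.2.2 ∧
        p.1 * ((m - 1) * p.2.1 - 2 * p.1) = 0 ∧
        -(p.2.1) ^ 2 - ssBeta σ / ssAlpha m σ * p.2.1 + p.1 - p.1 * p.2.1 - p.2.2 = 0 ∧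
        (σ - 2) * p.1 * p.2.2 = 0} =
      {p : ℝ × ℝ × ℝ |
          ∃ l ∈ Icc (-(ssBeta σ / ssAlpha m σ)) (0 : ℝ), p = P0pt m σ l} ∪
        {P2pt m σ} ∧
    {p : ℝ × ℝ × ℝ | p.1 = 0 ∧ 0 ≤ p.2.2 ∧
        p.1 * ((m - 1) * p.2.1 - 2 * p.1) = 0 ∧
        -(p.2.1) ^ 2 - ssBeta σ / ssAlpha m σ * p.2.1 + p.1 - p.1 * p.2.1 - p.2.2 = 0 ∧
        (σ - 2) * p.1 * p.2.2 = 0} =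
      {p : ℝ × ℝ × ℝ |
          ∃ l ∈ Icc (-(ssBeta σ / ssAlpha m σ)) (0 : ℝ), p = P0pt m σ l} := by

  have hσ2 : (0:ℝ) < σ - 2 := by linarith
  have hm' : (0:ℝ) < m - 1 := by linarith
  have hσp : (0:ℝ) < σ + 2 := by linarith
  have hmp : (0:ℝ) < m + 1 := by linarith
  have hA : ssAlpha m σ = (σ + 2) / ((σ - 2) * (m - 1)) := rfl
  have hApos : 0 < ssAlpha m σ := by
    rw [hA]; positivity
  have hc : ssBeta σ / ssAlpha m σ = 2 * (m - 1) / (σ + 2) := by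
    rw [hA, ssBeta]
    field_simp
  have hcpos : 0 < ssBeta σ / ssAlpha m σ := by rw [hc]; positivity
  -- characterization of X = 0 equilibria
  have key0 : ∀ x y z : ℝ, x = 0 → 0 ≤ z →
      (-(y) ^ 2 - ssBeta σ / ssAlpha m σ * y + x - x * y - z = 0) →
      ∃ l ∈ Icc (-(ssBeta σ / ssAlpha m σ)) (0 : ℝ), ((x, y, z) : ℝ × ℝ × ℝ) = P0pt m σ l := by
    intro x y z hx hz h2
    subst hx
    refine ⟨y, ⟨?_, ?_⟩, ?_⟩
    · nlinarith [hcpos, hz, sq_nonneg y]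
    · nlinarith [hcpos, hz, sq_nonneg (y + ssBeta σ / ssAlpha m σ)]
    · have hzv : z = -y ^ 2 - ssBeta σ / ssAlpha m σ * y := by linarith
      rw [P0pt, hzv]
  have rev0 : ∀ l : ℝ, l ∈ Icc (-(ssBeta σ / ssAlpha m σ)) (0 : ℝ) →
      ∀ x y z : ℝ, ((x, y, z) : ℝ × ℝ × ℝ) = P0pt m σ l →
      x = 0 ∧ 0 ≤ z ∧ x * ((m - 1) * y - 2 * x) = 0 ∧
        -(y) ^ 2 - ssBeta σ / ssAlpha m σ * y + x - x * y - z = 0 ∧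
        (σ - 2) * x * z = 0 := by
    intro l hl x y z hp
    simp only [P0pt, Prod.mk.injEq] at hp
    obtain ⟨hx, hy, hz⟩ := hp
    subst hx hy hz
    refine ⟨rfl, ?_, by ring, by ring, by ring⟩
    rcases hl with ⟨hl1, hl2⟩
    nlinarith [hcpos]
  constructor
  · ext ⟨x, y, z⟩
    simp only [mem_setOf_eq, mem_union, mem_singleton_iff]
    constructor
    · rintro ⟨hx, hz, h1, h2, h3⟩
      rcases eq_or_lt_of_le hx with hx0 | hx0
      · exact Or.inl (key0 x y z hx0.symm hz h2)
      · -- x > 0 case: P2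
        right
        have hz0 : z = 0 := by
          rcases mul_eq_zero.mp h3 with h | h
          · rcases mul_eq_zero.mp h with h | h
            · linarith
            · linarith
          · exact h
        have hx2 : (m - 1) * y - 2 * x = 0 := by
          rcases mul_eq_zero.mp h1 with h | h
          · linarith
          · exact h
        have hypos : 0 < y := by nlinarith
        have h2c : (σ + 2) * (ssBeta σ / ssAlpha m σ) = 2 * (m - 1) := by
          rw [hc]; field_simp
        have key : y * ((σ + 2) * (m + 1) * y - (m - 1) * (σ - 2)) = 0 := by
          linear_combination (-2 * (σ + 2)) * h2 + (-2 * y) * h2c + ((σ + 2) * (y - 1)) * hx2 + (-2 * (σ + 2)) * hz0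
        have hyval : y = (m - 1) * (σ - 2) / ((m + 1) * (σ + 2)) := by
          rcases mul_eq_zero.mp key with h | h
          · linarith
          · field_simp
            linear_combination h
        have hxval : x = (m - 1) * y / 2 := by linarith
        have hσ2' : σ - 2 ≠ 0 := ne_of_gt hσ2
        have hm'' : m - 1 ≠ 0 := ne_of_gt hm'
        have hσp' : σ + 2 ≠ 0 := ne_of_gt hσp
        have hmp' : m + 1 ≠ 0 := ne_of_gt hmp
        simp only [P2pt, Prod.mk.injEq]
        refine ⟨?_, ?_, hz0⟩
        · rw [hxval, hyval, hA]; field_simp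
        · rw [hyval, hA]; field_simp
    · rintro (⟨l, hl, hp⟩ | hp)
      · obtain ⟨hx, hz, h1, h2, h3⟩ := rev0 l hl x y z hp
        exact ⟨le_of_eq hx.symm, hz, h1, h2, h3⟩
      · simp only [P2pt, Prod.mk.injEq] at hp
        obtain ⟨hx, hy, hz⟩ := hp
        have hA0 : ssAlpha m σ ≠ 0 := ne_of_gt hApos
        have hσ2' : σ - 2 ≠ 0 := ne_of_gt hσ2
        have hm'' : m - 1 ≠ 0 := ne_of_gt hm'
        have hσp' : σ + 2 ≠ 0 := ne_of_gt hσp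
        have hmp' : m + 1 ≠ 0 := ne_of_gt hmp
        subst hx hy hz
        refine ⟨by positivity, le_refl 0, ?_, ?_, by ring⟩
        · field_simp
          ring
        · rw [hc, hA]
          field_simp
          ring
  · ext ⟨x, y, z⟩
    simp only [mem_setOf_eq]
    constructor
    · rintro ⟨hx, hz, h1, h2, h3⟩
      exact key0 x y z hx hz h2
    · rintro ⟨l, hl, hp⟩
      obtain ⟨hx, hz, h1, h2, h3⟩ := rev0 l hl x y z hp
      exact ⟨hx, hz, h1, h2, h3⟩
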